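/- arXiv:2111.05791 — 2 statements merged into one kernel-verified Lean document; each statement's English description precedes it below -/
import Mathlib

section
/- Let Z be a real random variable with continuous, strictly increasing CDF F, and e ~ Laplace(0, 1/ε) independent of Z, with ε > 0. Let G be the CDF of U + e where U ~ Uniform(0,1) is independent of e. Then the privatized variable Z̃ = F⁻¹(G(F(Z) + e)) has CDF F, i.e., Z̃ is equal in distribution to Z. -/
open MeasureTheory ProbabilityTheory Real

/-- DIP for a known continuous strictly increasing CDF `F`: the privatized
variable `Z̃ = F⁻¹(G(F(Z) + e))` has the same distribution as `Z`.  Here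
`e ~ Laplace(0, 1/ε)` is independent of `Z`, and `G` is the CDF of `U + e'`
with `U ~ Uniform(0,1)` independent of `e' ~ Laplace(0, 1/ε)`. -/
theorem stmt2 {Ω : Type*} [MeasureSpace Ω] [IsProbabilityMeasure (ℙ : Measure Ω)]
    (ε : ℝ) (hε : 0 < ε)
    (Z e : Ω → ℝ) (hmZ : Measurable Z) (hme : Measurable e)
    (hZe : IndepFun Z e ℙ)
    (he : Measure.map e ℙ =
      volume.withDensity (fun t => ENNReal.ofReal ((ε / 2) * Real.exp (-ε * |t|))))
    (F : ℝ → ℝ) (hFcont : Continuous F) (hFmono : StrictMono F)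
    (hFcdf : ∀ x, F x = (ℙ {ω | Z ω ≤ x}).toReal)
    (Finv : ℝ → ℝ) (hFinv₁ : ∀ x, Finv (F x) = x)
    (hFinv₂ : ∀ u : ℝ, 0 < u → u < 1 → F (Finv u) = u)
    -- `G` is the CDF of `U + e'` with `U ~ Uniform(0,1)` independent of `e' ~ Laplace(0,1/ε)`:
    {Ω' : Type*} [MeasureSpace Ω'] [IsProbabilityMeasure (ℙ : Measure Ω')]
    (U e' : Ω' → ℝ) (hmU : Measurable U) (hme' : Measurable e')
    (hUe' : IndepFun U e' ℙ)
    (hUlaw : Measure.map U ℙ = volume.restrict (Set.Ioo (0 : ℝ) 1))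
    (he'law : Measure.map e' ℙ =
      volume.withDensity (fun t => ENNReal.ofReal ((ε / 2) * Real.exp (-ε * |t|))))
    (G : ℝ → ℝ) (hG : ∀ x, G x = (ℙ {ω | U ω + e' ω ≤ x}).toReal) :
    ∀ x : ℝ, ℙ {ω | Finv (G (F (Z ω) + e ω)) ≤ x} = ℙ {ω | Z ω ≤ x} := by
  intro x
  set f : ℝ → ENNReal := fun t => ENNReal.ofReal ((ε / 2) * Real.exp (-ε * |t|)) with hf_def
  set μL : Measure ℝ := volume.withDensity f with hμL_def
  have hf_meas : Measurable f := by
    apply Measurable.ennreal_ofReal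
    fun_prop
  have hf_pos : ∀ t, 0 < f t := fun t =>
    ENNReal.ofReal_pos.2 (mul_pos (by positivity) (Real.exp_pos _))
  have hμL_pos : ∀ s : Set ℝ, MeasurableSet s → 0 < volume s → 0 < μL s := by
    intro s hs hvs
    rw [hμL_def, withDensity_apply _ hs, lintegral_pos_iff_support hf_meas]
    have hsupp : Function.support f = Set.univ :=
      Set.eq_univ_of_forall fun t => (hf_pos t).ne'
    rw [hsupp]
    simpa [Measure.restrict_apply_univ] using hvs
  have hμL_atom : ∀ c : ℝ, μL {c} = 0 := fun c =>
    (withDensity_absolutelyContinuous volume f) (Real.volume_singleton)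
  -- F bounds
  have hFnn : ∀ y, 0 ≤ F y := fun y => (hFcdf y) ▸ ENNReal.toReal_nonneg
  have hFle : ∀ y, F y ≤ 1 := by
    intro y
    rw [hFcdf]
    exact ENNReal.toReal_le_of_le_ofReal zero_le_one (by simpa using prob_le_one)
  have hF0 : ∀ y, 0 < F y := fun y => (hFnn (y - 1)).trans_lt (hFmono (by linarith))
  have hF1 : ∀ y, F y < 1 := fun y => (hFmono (lt_add_one y)).trans_le (hFle (y + 1))
  -- law of F ∘ Z is uniform on (0,1)
  have hFZ_meas : Measurable fun ω => F (Z ω) := hFcont.measurable.comp hmZ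
  have hFZlaw : Measure.map (fun ω => F (Z ω)) ℙ = volume.restrict (Set.Ioo 0 1) := by
    refine Measure.ext_of_Iic _ _ fun a => ?_
    rw [Measure.map_apply hFZ_meas measurableSet_Iic,
      Measure.restrict_apply measurableSet_Iic]
    rcases le_or_gt a 0 with ha | ha
    · have hL : (fun ω => F (Z ω)) ⁻¹' Set.Iic a = ∅ :=
        Set.eq_empty_iff_forall_notMem.2 fun ω h =>
          absurd ((hF0 (Z ω)).trans_le (le_trans h ha)) (lt_irrefl 0)
      have hR : Set.Iic a ∩ Set.Ioo 0 1 = ∅ :=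
        Set.eq_empty_iff_forall_notMem.2 fun t ⟨h1, h2, _⟩ =>
          absurd (h2.trans_le (h1.trans ha)) (lt_irrefl 0)
      rw [hL, hR]
      simp
    rcases le_or_gt 1 a with ha1 | ha1
    · have hL : (fun ω => F (Z ω)) ⁻¹' Set.Iic a = Set.univ :=
        Set.eq_univ_of_forall fun ω => ((hF1 (Z ω)).le.trans ha1)
      have hR : Set.Iic a ∩ Set.Ioo 0 1 = Set.Ioo 0 1 :=
        Set.inter_eq_right.2 fun t ht => (ht.2.le.trans ha1)
      rw [hL, hR, Real.volume_Ioo]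
      simp
    · have hFa : F (Finv a) = a := hFinv₂ a ha ha1
      have hL : (fun ω => F (Z ω)) ⁻¹' Set.Iic a = {ω | Z ω ≤ Finv a} := by
        ext ω
        simp only [Set.mem_preimage, Set.mem_Iic, Set.mem_setOf_eq]
        constructor
        · intro h
          have h' : F (Z ω) ≤ F (Finv a) := by rw [hFa]; exact h
          exact hFmono.le_iff_le.1 h'
        · intro h
          have h' : F (Z ω) ≤ F (Finv a) := hFmono.le_iff_le.2 h
          rwa [hFa] at h'
      have hval : (ℙ {ω | Z ω ≤ Finv a}).toReal = a := by rw [← hFcdf, hFa]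
      have hR : Set.Iic a ∩ Set.Ioo 0 1 = Set.Ioc 0 a := by
        ext t
        simp only [Set.mem_inter_iff, Set.mem_Iic, Set.mem_Ioo, Set.mem_Ioc]
        constructor
        · rintro ⟨h1, h2, _⟩; exact ⟨h2, h1⟩
        · rintro ⟨h1, h2⟩; exact ⟨h2, h1, lt_of_le_of_lt h2 ha1⟩
      rw [hL, hR, Real.volume_Ioc, ← ENNReal.ofReal_toReal (measure_ne_top ℙ _), hval,
        sub_zero]
  -- joint laws
  have hIndFZ : IndepFun (fun ω => F (Z ω)) e ℙ := hZe.comp hFcont.measurable measurable_id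
  have hpair1 : Measure.map (fun ω => (F (Z ω), e ω)) ℙ
      = (volume.restrict (Set.Ioo 0 1)).prod μL := by
    rw [← hFZlaw, ← he]
    exact (indepFun_iff_map_prod_eq_prod_map_map hFZ_meas.aemeasurable hme.aemeasurable).1 hIndFZ
  have hpair2 : Measure.map (fun ω => (U ω, e' ω)) ℙ
      = (volume.restrict (Set.Ioo 0 1)).prod μL := by
    rw [← hUlaw, ← he'law]
    exact (indepFun_iff_map_prod_eq_prod_map_map hmU.aemeasurable hme'.aemeasurable).1 hUe'
  set ν : Measure ℝ := Measure.map (fun ω => U ω + e' ω) ℙ with hν_def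
  have hνprod : ν = Measure.map (fun p : ℝ × ℝ => p.1 + p.2)
      ((volume.restrict (Set.Ioo 0 1)).prod μL) := by
    rw [← hpair2, Measure.map_map measurable_add (hmU.prodMk hme')]
    rfl
  have hWlaw : Measure.map (fun ω => F (Z ω) + e ω) ℙ = ν := by
    rw [hνprod, ← hpair1, Measure.map_map measurable_add (hFZ_meas.prodMk hme)]
    rfl
  have hνprob : IsProbabilityMeasure ν := Measure.isProbabilityMeasure_map (hmU.add hme').aemeasurable
  have hνIic : ∀ t, ν (Set.Iic t) = ℙ {ω | U ω + e' ω ≤ t} := by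
    intro t
    rw [hν_def, Measure.map_apply (show Measurable (fun ω => U ω + e' ω) from hmU.add hme') measurableSet_Iic]
    rfl
  have hGν : ∀ t, G t = (ν (Set.Iic t)).toReal := fun t => by rw [hG, hνIic]
  -- positivity of ν on intervals
  have hνIoc : ∀ s t : ℝ, s < t → 0 < ν (Set.Ioc s t) := by
    intro s t hst
    set a : ℝ := min ((t - s) / 2) (1 / 2) with ha_def
    have ha0 : 0 < a := lt_min (by linarith) (by norm_num)
    have ha1 : a ≤ 1 / 2 := min_le_right _ _
    have ha2 : 2 * a ≤ t - s := by
      have := min_le_left ((t - s) / 2) (1 / 2 : ℝ)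
      have : a ≤ (t - s) / 2 := by rw [ha_def]; exact min_le_left _ _
      linarith
    have hsub : (Set.Ioc 0 a) ×ˢ (Set.Ioc s (s + a))
        ⊆ (fun p : ℝ × ℝ => p.1 + p.2) ⁻¹' Set.Ioc s t := by
      rintro ⟨u, v⟩ ⟨⟨hu0, hua⟩, hvs, hva⟩
      exact ⟨by simpa using by linarith, by simpa using by linarith⟩
    rw [hνprod, Measure.map_apply measurable_add measurableSet_Ioc]
    calc (0 : ENNReal)
        < ((volume.restrict (Set.Ioo 0 1)).prod μL) ((Set.Ioc 0 a) ×ˢ (Set.Ioc s (s + a))) := by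
          rw [Measure.prod_prod, Measure.restrict_apply measurableSet_Ioc]
          have h1 : Set.Ioc (0 : ℝ) a ∩ Set.Ioo 0 1 = Set.Ioc 0 a :=
            Set.inter_eq_left.2 fun y hy => ⟨hy.1, lt_of_le_of_lt hy.2 (by linarith)⟩
          rw [h1, Real.volume_Ioc, sub_zero]
          exact ENNReal.mul_pos (ENNReal.ofReal_pos.2 ha0).ne'
            (hμL_pos _ measurableSet_Ioc
              (by rw [Real.volume_Ioc]; exact ENNReal.ofReal_pos.2 (by linarith))).ne'
      _ ≤ _ := measure_mono hsub
  have hGsm : StrictMono G := by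
    intro s t hst
    have hd : ν (Set.Iic t) = ν (Set.Iic s) + ν (Set.Ioc s t) := by
      rw [← Set.Iic_union_Ioc_eq_Iic hst.le,
        measure_union (Set.Iic_disjoint_Ioc le_rfl) measurableSet_Ioc]
    rw [hGν s, hGν t, hd, ENNReal.toReal_add (measure_ne_top _ _) (measure_ne_top _ _)]
    have := ENNReal.toReal_pos (hνIoc s t hst).ne' (measure_ne_top _ _)
    linarith
  have hGnn : ∀ t, 0 ≤ G t := fun t => (hG t) ▸ ENNReal.toReal_nonneg
  have hGle : ∀ t, G t ≤ 1 := by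
    intro t
    rw [hG]
    exact ENNReal.toReal_le_of_le_ofReal zero_le_one (by simpa using prob_le_one)
  have hG0 : ∀ t, 0 < G t := fun t => (hGnn (t - 1)).trans_lt (hGsm (by linarith))
  have hG1 : ∀ t, G t < 1 := fun t => (hGsm (lt_add_one t)).trans_le (hGle (t + 1))
  -- ν has no atoms
  have hν_atom : ∀ c : ℝ, ν {c} = 0 := by
    intro c
    rw [hνprod, Measure.map_apply measurable_add (measurableSet_singleton c),
      Measure.prod_apply (measurable_add (measurableSet_singleton c))]
    have hslice : ∀ u : ℝ,
        (Prod.mk u ⁻¹' ((fun p : ℝ × ℝ => p.1 + p.2) ⁻¹' {c})) = {c - u} := by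
      intro u
      ext v
      simp only [Set.mem_preimage, Set.mem_singleton_iff]
      constructor <;> intro h <;> linarith
    simp only [hslice, hμL_atom, lintegral_zero]
  -- G = cdf ν, continuity
  have hGcdf : ∀ t, G t = cdf ν t := fun t => by rw [hGν, cdf_eq_real]; rfl
  have hgc : Continuous (cdf ν) := by
    rw [continuous_iff_continuousAt]
    intro t
    rw [(cdf ν).mono.continuousAt_iff_leftLim_eq_rightLim]
    have h1 : (cdf ν).measure {t} = 0 := by rw [measure_cdf]; exact hν_atom t
    rw [StieltjesFunction.measure_singleton] at h1
    have h2 : cdf ν t - Function.leftLim (cdf ν) t ≤ 0 := by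
      by_contra h
      push_neg at h
      rw [ENNReal.ofReal_eq_zero] at h1
      linarith
    have h3 : Function.leftLim (cdf ν) t ≤ cdf ν t := (cdf ν).mono.leftLim_le le_rfl
    have h4 : Function.leftLim (cdf ν) t = cdf ν t := le_antisymm h3 (by linarith)
    rw [h4, (cdf ν).rightLim_eq]
  -- find t₀ with G t₀ = F x by IVT
  obtain ⟨a, ha⟩ : ∃ a, cdf ν a < F x :=
    ((tendsto_cdf_atBot ν).eventually_lt_const (hF0 x)).exists
  obtain ⟨b, hb⟩ : ∃ b, F x < cdf ν b :=
    ((tendsto_cdf_atTop ν).eventually_const_lt (hF1 x)).exists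
  have hab : a ≤ b := by
    by_contra h
    push_neg at h
    have := (monotone_cdf ν) h.le
    linarith
  obtain ⟨t₀, -, ht₀⟩ : ∃ t₀ ∈ Set.Icc a b, cdf ν t₀ = F x := by
    have him := intermediate_value_Icc hab (hgc.continuousOn)
    have : F x ∈ (cdf ν) '' Set.Icc a b := him ⟨ha.le, hb.le⟩
    obtain ⟨t₀, ht₀mem, ht₀⟩ := this
    exact ⟨t₀, ht₀mem, ht₀⟩
  have hGt₀ : G t₀ = F x := by rw [hGcdf]; exact ht₀
  -- final computation
  have hsetEq : {ω | Finv (G (F (Z ω) + e ω)) ≤ x} = {ω | F (Z ω) + e ω ≤ t₀} := by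
    ext ω
    simp only [Set.mem_setOf_eq]
    set w := F (Z ω) + e ω with hw
    constructor
    · intro h
      have h1 : F (Finv (G w)) ≤ F x := hFmono.le_iff_le.2 h
      rw [hFinv₂ _ (hG0 w) (hG1 w), ← hGt₀] at h1
      exact hGsm.le_iff_le.1 h1
    · intro h
      have h1 : G w ≤ G t₀ := hGsm.monotone h
      rw [hGt₀] at h1
      have h2 : F (Finv (G w)) ≤ F x := by rw [hFinv₂ _ (hG0 w) (hG1 w)]; exact h1
      exact hFmono.le_iff_le.1 h2
  rw [hsetEq]
  have hmap : ℙ {ω | F (Z ω) + e ω ≤ t₀} = ν (Set.Iic t₀) := by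
    rw [← hWlaw, Measure.map_apply (show Measurable (fun ω => F (Z ω) + e ω) from hFZ_meas.add hme) measurableSet_Iic]
    rfl
  have h1 : ν (Set.Iic t₀) = ENNReal.ofReal (F x) := by
    have hv : (ν (Set.Iic t₀)).toReal = F x := by rw [← hGν, hGt₀]
    rw [← ENNReal.ofReal_toReal (measure_ne_top ν _), hv]
  have h2 : ℙ {ω | Z ω ≤ x} = ENNReal.ofReal (F x) := by
    rw [← ENNReal.ofReal_toReal (measure_ne_top ℙ _), ← hFcdf]
  rw [hmap, h1, h2]
end

section
/- Let e be a real random variable with density f such that f(0) = M₀ > 0 and f(t) → 0 as |t| → ∞ (more precisely, f is integrable). Then for any β₀ ∈ ℝ and β₁ ≠ 0, the linear mechanism m(z) = β₀ + β₁ z + e on ℝ is not ε-differentially private for any ε ≥ 0: there exist z, z' ∈ ℝ and a point t₀ with density ratio f(t₀ − β₀ − β₁ z)/f(t₀ − β₀ − β₁ z') > e^{ε}. -/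
open MeasureTheory Real

/-- Lemma 2 (univariate case): a linear mechanism `m(z) = β₀ + β₁ z + e`
(`β₁ ≠ 0`) with noise density `f` (integrable, `f(0) = M₀ > 0`) on data with
unbounded support is not ε-differentially private for any `ε ≥ 0`: there are
inputs `z, z'` and an output `t₀` whose conditional density ratio exceeds
`e^ε`. -/
theorem stmt8 (f : ℝ → ℝ) (hf : ∀ t, 0 ≤ f t) (hint : Integrable f)
    (M₀ : ℝ) (hM₀ : 0 < M₀) (hf0 : f 0 = M₀)
    (β₀ β₁ : ℝ) (hβ₁ : β₁ ≠ 0) (ε : ℝ) (hε : 0 ≤ ε) :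
    ∃ z z' t₀ : ℝ,
      Real.exp ε * f (t₀ - β₀ - β₁ * z') < f (t₀ - β₀ - β₁ * z) := by
  have hc : 0 < M₀ / Real.exp ε := div_pos hM₀ (Real.exp_pos ε)
  have hs : ∃ s : ℝ, f s < M₀ / Real.exp ε := by
    by_contra h
    push_neg at h
    have hconst : Integrable (fun _ : ℝ => M₀ / Real.exp ε) := by
      refine hint.mono' aestronglyMeasurable_const ?_
      filter_upwards with x
      rw [Real.norm_of_nonneg hc.le]
      exact h x
    rw [integrable_const_iff] at hconst
    rcases hconst with h0 | hfin
    · exact hc.ne' h0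
    · exact (@measure_lt_top _ _ volume hfin Set.univ).ne Real.volume_univ
  obtain ⟨s, hs⟩ := hs
  refine ⟨0, -s / β₁, β₀, ?_⟩
  have h1 : β₀ - β₀ - β₁ * (-s / β₁) = s := by field_simp; ring
  have h2 : β₀ - β₀ - β₁ * 0 = 0 := by ring
  rw [h1, h2, hf0]
  calc Real.exp ε * f s < Real.exp ε * (M₀ / Real.exp ε) := by
        exact mul_lt_mul_of_pos_left hs (Real.exp_pos ε)
    _ = M₀ := by field_simp
end
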